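/- Let G be a connected graph and U ⊆ V(G) a set such that every connected component H of G[V(G) \ U] has cop number at most ℓ. Then the cop number of G satisfies c(G) ≤ ⌈|U|/2⌉ + ℓ. -/

import Mathlib

open SimpleGraph

variable {V : Type*}

/-- A (positional) strategy for `k` cops on the graph `G`: an initial placement and a
move function; each cop may stay or move to an adjacent vertex. -/
structure CopStrat (G : SimpleGraph V) (k : ℕ) where
  init : Fin k → V
  move : (Fin k → V) → V → Fin k → V
  valid : ∀ c r i, move c r i = c i ∨ G.Adj (c i) (move c r i)

/-- A strategy for the robber: an initial placement (knowing the cops' placement) and a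
move function; the robber may stay or move to an adjacent vertex. -/
structure RobStrat (G : SimpleGraph V) (k : ℕ) where
  init : (Fin k → V) → V
  move : (Fin k → V) → V → V
  valid : ∀ c r, move c r = r ∨ G.Adj r (move c r)

/-- The play determined by initial placements and move functions: position of the cops and
of the robber after `n` full rounds (cops move first in each round). -/
def gplay {k : ℕ} (ci : Fin k → V) (cm : (Fin k → V) → V → Fin k → V)
    (ri : (Fin k → V) → V) (rm : (Fin k → V) → V → V) : ℕ → (Fin k → V) × V
  | 0 => (ci, ri ci)
  | n + 1 =>
    let p := gplay ci cm ri rm n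
    let c' := cm p.1 p.2
    (c', rm c' p.2)

/-- The robber is caught: at some moment (either on a cops' move, or because the
positions already coincide) a cop occupies the robber's vertex. -/
def gCaught {k : ℕ} (ci : Fin k → V) (cm : (Fin k → V) → V → Fin k → V)
    (ri : (Fin k → V) → V) (rm : (Fin k → V) → V → V) : Prop :=
  ∃ n, ∃ i,
    (gplay ci cm ri rm n).1 i = (gplay ci cm ri rm n).2 ∨
      cm (gplay ci cm ri rm n).1 (gplay ci cm ri rm n).2 i = (gplay ci cm ri rm n).2

/-- `k` cops have a winning strategy on `G`. -/
def CopsWin (G : SimpleGraph V) (k : ℕ) : Prop :=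
  ∃ CS : CopStrat G k, ∀ RS : RobStrat G k,
    gCaught CS.init CS.move RS.init RS.move

/-- The cop number of `G`. -/
noncomputable def copNumber (G : SimpleGraph V) : ℕ := sInf {k | CopsWin G k}


/-! ### Auxiliary general lemmas -/

/-- cops using `CS.move` from position `c`, robber at `r` (cops to move), catch every
(positional) robber continuation. -/
def WinFrom (G : SimpleGraph V) {k : ℕ} (CS : CopStrat G k) (c : Fin k → V) (r : V) : Prop :=
  ∀ rm : (Fin k → V) → V → V, (∀ x y, rm x y = y ∨ G.Adj y (rm x y)) →
    gCaught c CS.move (fun _ => r) rm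

lemma winFrom_init {G : SimpleGraph V} {k : ℕ} {CS : CopStrat G k}
    (hCS : ∀ RS : RobStrat G k, gCaught CS.init CS.move RS.init RS.move) (r : V) :
    WinFrom G CS CS.init r :=
  fun rm hrm => hCS ⟨fun _ => r, rm, hrm⟩

lemma WinFrom.step {G : SimpleGraph V} {k : ℕ} {CS : CopStrat G k} {c : Fin k → V} {r r' : V}
    (hW : WinFrom G CS c r) (hr' : r' = r ∨ G.Adj r r')
    (h0 : ∀ i, c i ≠ r) (h1 : ∀ i, CS.move c r i ≠ r) :
    WinFrom G CS (CS.move c r) r' := by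
  classical
  intro rm hrm
  by_contra hnc
  set c' := CS.move c r with hc'
  set rm2 : (Fin k → V) → V → V := fun x y => if x = c' ∧ y = r then r' else rm x y with hrm2def
  have hrm2 : ∀ x y, rm2 x y = y ∨ G.Adj y (rm2 x y) := by
    intro x y
    by_cases hxy : x = c' ∧ y = r
    · obtain ⟨hx, hy⟩ := hxy
      subst hy
      have hrw : rm2 x y = r' := by simp [hrm2def, hx]
      rw [hrw]; exact hr'
    · simp only [hrm2def, if_neg hxy]; exact hrm x y
  obtain ⟨n, i, hcap⟩ := hW rm2 hrm2
  set P := gplay c CS.move (fun _ => r) rm2 with hP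
  set Q := gplay c' CS.move (fun _ => r') rm with hQ
  have hP0 : P 0 = (c, r) := rfl
  have key : ∀ n, ∃ m, P (n + 1) = Q m := by
    intro n
    induction n with
    | zero =>
      refine ⟨0, ?_⟩
      have : P 1 = (c', rm2 c' r) := rfl
      rw [this]
      have : rm2 c' r = r' := by simp [hrm2def]
      rw [this]; rfl
    | succ n ih =>
      obtain ⟨m, hm⟩ := ih
      by_cases hcase : CS.move (P (n+1)).1 (P (n+1)).2 = c' ∧ (P (n+1)).2 = r
      · refine ⟨0, ?_⟩
        have : P (n + 2) = (CS.move (P (n+1)).1 (P (n+1)).2,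
            rm2 (CS.move (P (n+1)).1 (P (n+1)).2) (P (n+1)).2) := rfl
        rw [this, hcase.1, hcase.2]
        have : rm2 c' r = r' := by simp [hrm2def]
        rw [this]; rfl
      · refine ⟨m + 1, ?_⟩
        have h2 : P (n + 2) = (CS.move (P (n+1)).1 (P (n+1)).2,
            rm2 (CS.move (P (n+1)).1 (P (n+1)).2) (P (n+1)).2) := rfl
        have h3 : Q (m + 1) = (CS.move (Q m).1 (Q m).2,
            rm (CS.move (Q m).1 (Q m).2) (Q m).2) := rfl
        rw [h2, h3, ← hm]
        have : rm2 (CS.move (P (n+1)).1 (P (n+1)).2) (P (n+1)).2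
            = rm (CS.move (P (n+1)).1 (P (n+1)).2) (P (n+1)).2 := by
          simp only [hrm2def, if_neg hcase]
        rw [this]
  rcases n with _ | n
  · rcases hcap with hcap | hcap
    · exact h0 i (by simpa [hP0] using hcap)
    · exact h1 i (by simpa [hP0] using hcap)
  · obtain ⟨m, hm⟩ := key n
    have hm' : gplay c' CS.move (fun _ => r') rm m = P (n + 1) := hm.symm
    exact hnc ⟨m, i, by rw [hm']; exact hcap⟩

/-- a winning strategy wins from its initial position against positional continuations. -/
lemma copsWin_winFrom {G : SimpleGraph V} {k : ℕ} (h : CopsWin G k) :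
    ∃ CS : CopStrat G k, ∀ r, WinFrom G CS CS.init r := by
  obtain ⟨CS, hCS⟩ := h
  exact ⟨CS, winFrom_init hCS⟩

lemma copsWin_mono {G : SimpleGraph V} [Nonempty V] {k k' : ℕ}
    (h : CopsWin G k) (hkk : k ≤ k') : CopsWin G k' := by
  rcases Nat.eq_zero_or_pos k with hk0 | hkpos
  · exfalso
    subst hk0
    obtain ⟨CS, hCS⟩ := h
    obtain ⟨n, i, -⟩ := hCS ⟨fun _ => Classical.arbitrary V, fun _ r => r, fun _ _ => Or.inl rfl⟩
    exact i.elim0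
  obtain ⟨CS, hCS⟩ := h
  let z : Fin k := ⟨0, hkpos⟩
  let lift : (Fin k → V) → (Fin k' → V) :=
    fun c i => if hi : (i : ℕ) < k then c ⟨i, hi⟩ else CS.init z
  let down : (Fin k' → V) → (Fin k → V) := fun c j => c (Fin.castLE hkk j)
  have hdl : ∀ c, down (lift c) = c := by
    intro c; funext j
    simp only [down, lift]
    rw [dif_pos (show ((Fin.castLE hkk j : Fin k') : ℕ) < k from j.2)]
    exact congrArg c (Fin.ext rfl)
  let mv : (Fin k' → V) → V → Fin k' → V :=
    fun c r i => if hi : (i : ℕ) < k then CS.move (down c) r ⟨i, hi⟩ else c i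
  refine ⟨⟨lift CS.init, mv, ?_⟩, ?_⟩
  · intro c r i
    by_cases hi : (i : ℕ) < k
    · have : mv c r i = CS.move (down c) r ⟨i, hi⟩ := dif_pos hi
      rw [this]
      rcases CS.valid (down c) r ⟨i, hi⟩ with h | h
      · exact Or.inl h
      · exact Or.inr h
    · exact Or.inl (dif_neg hi)
  · intro RS'
    let RS : RobStrat G k := ⟨fun c => RS'.init (lift c), fun c r => RS'.move (lift c) r,
      fun c r => RS'.valid (lift c) r⟩
    set P := gplay CS.init CS.move RS.init RS.move with hP
    have corr : ∀ n, gplay (lift CS.init) mv RS'.init RS'.move n = (lift (P n).1, (P n).2) := by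
      intro n
      induction n with
      | zero =>
        simp only [gplay, hP]
        rfl
      | succ n ih =>
        have h1 : gplay (lift CS.init) mv RS'.init RS'.move (n+1)
            = (mv (lift (P n).1) (P n).2,
               RS'.move (mv (lift (P n).1) (P n).2) (P n).2) := by
          show (mv _ _, RS'.move _ _) = _
          rw [ih]
        have h2 : mv (lift (P n).1) (P n).2 = lift (P (n+1)).1 := by
          funext i
          by_cases hi : (i : ℕ) < k
          · have : mv (lift (P n).1) (P n).2 i = CS.move (down (lift (P n).1)) (P n).2 ⟨i, hi⟩ :=
              dif_pos hi
            rw [this, hdl]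
            have : lift (P (n+1)).1 i = (P (n+1)).1 ⟨i, hi⟩ := dif_pos hi
            rw [this]; rfl
          · have h3 : mv (lift (P n).1) (P n).2 i = lift (P n).1 i := dif_neg hi
            have h4 : lift (P n).1 i = CS.init z := dif_neg hi
            have h5 : lift (P (n+1)).1 i = CS.init z := dif_neg hi
            rw [h3, h4, h5]
        rw [h1, h2]
        have : RS'.move (lift (P (n+1)).1) (P n).2 = (P (n+1)).2 := rfl
        rw [this]
    obtain ⟨n, i, hcap⟩ := hCS RS
    refine ⟨n, Fin.castLE hkk i, ?_⟩
    rw [corr n]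
    rcases hcap with hcap | hcap
    · left
      show lift (P n).1 (Fin.castLE hkk i) = (P n).2
      have : lift (P n).1 (Fin.castLE hkk i) = (P n).1 i := by
        simp only [lift]
        rw [dif_pos (show ((Fin.castLE hkk i : Fin k') : ℕ) < k from i.2)]
        exact congrArg (P n).1 (Fin.ext rfl)
      rw [this]; exact hcap
    · right
      show mv (lift (P n).1) (P n).2 (Fin.castLE hkk i) = (P n).2
      have : mv (lift (P n).1) (P n).2 (Fin.castLE hkk i)
          = CS.move (down (lift (P n).1)) (P n).2 i := by
        simp only [mv]
        rw [dif_pos (show ((Fin.castLE hkk i : Fin k') : ℕ) < k from i.2)]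
        exact congrArg (CS.move (down (lift (P n).1)) (P n).2) (Fin.ext rfl)
      rw [this, hdl]; exact hcap

lemma copsWin_card {W : Type*} [Fintype W] (H : SimpleGraph W) :
    CopsWin H (Fintype.card W) := by
  refine ⟨⟨fun i => (Fintype.equivFin W).symm i, fun c _ _ => c _, fun c r i => Or.inl rfl⟩, ?_⟩
  intro RS
  refine ⟨0, Fintype.equivFin W (RS.init fun i => (Fintype.equivFin W).symm i), Or.inl ?_⟩
  show (Fintype.equivFin W).symm _ = (RS.init fun i => (Fintype.equivFin W).symm i)
  simp

lemma copsWin_of_copNumber_le {W : Type*} [Fintype W] [Nonempty W] (H : SimpleGraph W)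
    {ℓ : ℕ} (h : copNumber H ≤ ℓ) : CopsWin H ℓ := by
  have hne : {k | CopsWin H k}.Nonempty := ⟨Fintype.card W, copsWin_card H⟩
  have hmem := Nat.sInf_mem hne
  exact copsWin_mono hmem h

/-- An absorbing property with a decreasing measure eventually holds forever. -/
lemma eventually_forever {S : ℕ → Prop} {M : ℕ → ℕ}
    (habs : ∀ n, S n → S (n + 1)) (hdec : ∀ n, ¬ S n → M (n + 1) < M n) :
    ∃ T, ∀ n, T ≤ n → S n := by
  have hex : ∃ n, S n := by
    by_contra hno
    push_neg at hno
    have key : ∀ n, M n + n ≤ M 0 := by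
      intro n
      induction n with
      | zero => simp
      | succ n ih =>
        have := hdec n (hno n)
        omega
    have := key (M 0 + 1)
    omega
  obtain ⟨T, hT⟩ := hex
  refine ⟨T, fun n hn => ?_⟩
  obtain ⟨d, rfl⟩ := Nat.exists_eq_add_of_le hn
  clear hn
  induction d with
  | zero => exact hT
  | succ d ih => exact habs _ ih

section Walks

variable {G : SimpleGraph V}

lemma dist_start_getVert (hG : G.Connected) :
    ∀ {u v : V} (w : G.Walk u v) (i : ℕ), G.dist u (w.getVert i) ≤ i := by
  intro u v w
  induction w with
  | nil =>
    intro i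
    rw [SimpleGraph.Walk.getVert_of_length_le _ (by simp : (SimpleGraph.Walk.nil : G.Walk _ _).length ≤ i)]
    simp [SimpleGraph.dist_self]
  | @cons u x v hadj q ih =>
    intro i
    cases i with
    | zero => simp
    | succ n =>
      have h1 : (SimpleGraph.Walk.cons hadj q).getVert (n + 1) = q.getVert n :=
        SimpleGraph.Walk.getVert_cons_succ q hadj
      rw [h1]
      calc G.dist u (q.getVert n) ≤ G.dist u x + G.dist x (q.getVert n) :=
            hG.dist_triangle
        _ ≤ 1 + n := by
            have h2 : G.dist u x ≤ 1 := by
              have := SimpleGraph.dist_le (SimpleGraph.Walk.cons hadj (SimpleGraph.Walk.nil))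
              simpa using this
            exact Nat.add_le_add h2 (ih n)
        _ = n + 1 := by omega

lemma dist_getVert_end :
    ∀ {u v : V} (w : G.Walk u v) (i : ℕ), G.dist (w.getVert i) v ≤ w.length - i := by
  intro u v w
  induction w with
  | nil =>
    intro i
    rw [SimpleGraph.Walk.getVert_of_length_le _ (by simp : (SimpleGraph.Walk.nil : G.Walk _ _).length ≤ i)]
    simp [SimpleGraph.dist_self]
  | @cons u x v hadj q ih =>
    intro i
    cases i with
    | zero =>
      have h0 : (SimpleGraph.Walk.cons hadj q).getVert 0 = u := SimpleGraph.Walk.getVert_zero _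
      rw [h0]
      have := SimpleGraph.dist_le (SimpleGraph.Walk.cons hadj q)
      omega
    | succ n =>
      have h1 : (SimpleGraph.Walk.cons hadj q).getVert (n + 1) = q.getVert n :=
        SimpleGraph.Walk.getVert_cons_succ q hadj
      rw [h1]
      have := ih n
      have h2 : (SimpleGraph.Walk.cons hadj q).length = q.length + 1 := by simp
      omega

end Walks

/-- move an index one step towards a target index. -/
def toward (s F : ℕ) : ℕ := if s < F then s + 1 else if F < s then s - 1 else s

lemma toward_of_close {s F : ℕ} (h1 : s ≤ F + 1) (h2 : F ≤ s + 1) : toward s F = F := by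
  unfold toward
  split_ifs <;> omega

section Approach
open scoped Classical

variable {G : SimpleGraph V}

/-- A step from `v` towards `tgt` decreasing the distance. -/
noncomputable def approach (hG : G.Connected) (tgt v : V) : V :=
  if _ : v = tgt then v
  else (Classical.choose ((hG v tgt).exists_walk_length_eq_dist)).getVert 1

lemma approach_self (hG : G.Connected) (tgt : V) : approach hG tgt tgt = tgt := dif_pos rfl

lemma approach_spec (hG : G.Connected) {tgt v : V} (h : v ≠ tgt) :
    G.Adj v (approach hG tgt v) ∧ G.dist (approach hG tgt v) tgt < G.dist v tgt := by
  have hw := Classical.choose_spec ((hG v tgt).exists_walk_length_eq_dist)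
  set w := Classical.choose ((hG v tgt).exists_walk_length_eq_dist) with hwdef
  have hpos : 0 < G.dist v tgt := hG.pos_dist_of_ne h
  have hlen : 0 < w.length := by omega
  have happ : approach hG tgt v = w.getVert 1 := dif_neg h
  constructor
  · rw [happ]
    have := w.adj_getVert_succ (i := 0) hlen
    rwa [w.getVert_zero] at this
  · rw [happ]
    have := dist_getVert_end w 1
    omega

lemma adj_dist_le_one {G : SimpleGraph V} {x y : V} (h : G.Adj x y) : G.dist x y ≤ 1 := by
  have := SimpleGraph.dist_le (SimpleGraph.Walk.cons h SimpleGraph.Walk.nil)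
  simpa using this

end Approach

section IsomPath

variable {G : SimpleGraph V} {a b : V} (w : G.Walk a b)

lemma isom_dist (hG : G.Connected) (hw : w.length = G.dist a b) :
    ∀ i ≤ w.length, G.dist a (w.getVert i) = i := by
  intro i hi
  have h1 := dist_start_getVert hG w i
  have h2 := dist_getVert_end w i
  have h3 : G.dist a b ≤ G.dist a (w.getVert i) + G.dist (w.getVert i) b := hG.dist_triangle
  omega

/-- the projection index of `r` onto the path -/
noncomputable def pproj (r : V) : ℕ := min (G.dist a r) w.length

lemma pproj_le (r : V) : pproj w r ≤ w.length := min_le_right _ _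

lemma pproj_getVert (hG : G.Connected) (hh : w.length = G.dist a b) {i : ℕ} (hi : i ≤ w.length) : pproj w (w.getVert i) = i := by
  unfold pproj
  rw [isom_dist w hG hh i hi]
  omega

lemma pproj_step (hG : G.Connected) {r r' : V} (h : r' = r ∨ G.Adj r r') :
    pproj w r' ≤ pproj w r + 1 ∧ pproj w r ≤ pproj w r' + 1 := by
  rcases h with rfl | h
  · omega
  · have h1 : G.dist a r' ≤ G.dist a r + G.dist r r' := hG.dist_triangle
    have h2 : G.dist a r ≤ G.dist a r' + G.dist r' r := hG.dist_triangle
    have h3 : G.dist r r' ≤ 1 := adj_dist_le_one h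
    have h4 : G.dist r' r ≤ 1 := adj_dist_le_one h.symm
    unfold pproj
    omega

end IsomPath


set_option maxHeartbeats 2000000 in
/-- If every connected component of `G − U` has cop number at most `ℓ`, then
`c(G) ≤ ⌈|U|/2⌉ + ℓ`. -/
theorem copNumber_le_of_components_of_delete
    {V : Type*} [Fintype V] (G : SimpleGraph V) (hG : G.Connected)
    (U : Finset V) (ℓ : ℕ)
    (h : ∀ c : (G.induce ((↑U : Set V)ᶜ)).ConnectedComponent,
      copNumber ((G.induce ((↑U : Set V)ᶜ)).induce c.supp) ≤ ℓ) :
    copNumber G ≤ (U.card + 1) / 2 + ℓ := by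
  classical
  have hV : Nonempty V := hG.nonempty
  set m := U.card with hm
  set g := (m + 1) / 2 with hgdef
  suffices hwin : CopsWin G (g + ℓ) by exact Nat.sInf_le hwin
  -- enumerate U
  let uE : ↥U ≃ Fin m := Fintype.equivFinOfCardEq (Fintype.card_coe U)
  let uEnum : Fin m → V := fun i => ↑(uE.symm i)
  have husurj : ∀ x ∈ U, ∃ i, uEnum i = x := fun x hx =>
    ⟨uE ⟨x, hx⟩, by simp [uEnum]⟩
  have hma : ∀ j : Fin g, 2 * (j : ℕ) < m := by
    intro j; have := j.2; omega
  have hmb : ∀ j : Fin g, min (2 * (j : ℕ) + 1) (m - 1) < m := by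
    intro j; have := j.2; omega
  let A : Fin g → V := fun j => uEnum ⟨2 * j, hma j⟩
  let B : Fin g → V := fun j => uEnum ⟨min (2 * (j : ℕ) + 1) (m - 1), hmb j⟩
  -- shortest paths
  choose W hW using fun j : Fin g => (hG (A j) (B j)).exists_walk_length_eq_dist
  let t : Fin g → ℕ := fun j => (W j).length
  let pp : Fin g → ℕ → V := fun j i => (W j).getVert i
  let f : Fin g → V → ℕ := fun j r => pproj (W j) r
  have hf_le : ∀ j r, f j r ≤ t j := fun j r => pproj_le _ r
  have hf_get : ∀ j i, i ≤ t j → f j (pp j i) = i := fun j i hi =>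
    pproj_getVert (W j) hG (hW j) hi
  have hf_step : ∀ (j) {r r'}, (r' = r ∨ G.Adj r r') →
      f j r' ≤ f j r + 1 ∧ f j r ≤ f j r' + 1 := by
    intro j r r' h'
    exact pproj_step (W j) hG h'
  have hppA : ∀ j, pp j 0 = A j := fun j => (W j).getVert_zero
  have hppB : ∀ j, pp j (t j) = B j := fun j => (W j).getVert_length
  have hpp_adj : ∀ j i, i < t j → G.Adj (pp j i) (pp j (i + 1)) := fun j i hi =>
    (W j).adj_getVert_succ hi
  let OnP : Fin g → V → Prop := fun j v => ∃ i, i ≤ t j ∧ pp j i = v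
  have hOnP_f : ∀ j v, OnP j v → pp j (f j v) = v := by
    rintro j v ⟨i, hi, rfl⟩
    rw [hf_get j i hi]
  have hUcov : ∀ x ∈ U, ∃ j : Fin g, OnP j x := by
    intro x hx
    obtain ⟨i, rfl⟩ := husurj x hx
    have hig : (i : ℕ) / 2 < g := by have := i.2; omega
    refine ⟨⟨(i : ℕ) / 2, hig⟩, ?_⟩
    rcases Nat.even_or_odd (i : ℕ) with he | ho
    · refine ⟨0, Nat.zero_le _, ?_⟩
      rw [hppA]
      show uEnum _ = uEnum i
      congr 1
      apply Fin.ext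
      show 2 * ((i : ℕ) / 2) = (i : ℕ)
      obtain ⟨c', hc'⟩ := he
      omega
    · refine ⟨t _, le_refl _, ?_⟩
      rw [hppB]
      show uEnum _ = uEnum i
      congr 1
      apply Fin.ext
      show min (2 * ((i : ℕ) / 2) + 1) (m - 1) = (i : ℕ)
      obtain ⟨c', hc'⟩ := ho
      have := i.2
      omega
  -- components of G − U
  set S : Set V := (↑U : Set V)ᶜ with hSdef
  set Gc : SimpleGraph ↥S := G.induce S with hGc
  have hCW : ∀ cc : Gc.ConnectedComponent,
      ∃ CS : CopStrat (Gc.induce cc.supp) ℓ, ∀ r, WinFrom _ CS CS.init r := by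
    intro cc
    obtain ⟨x, hx⟩ := cc.exists_rep
    haveI : Nonempty ↥(cc.supp) :=
      ⟨⟨x, (SimpleGraph.ConnectedComponent.mem_supp_iff cc x).mpr hx⟩⟩
    exact copsWin_winFrom (copsWin_of_copNumber_le _ (h cc))
  choose CSc hCSc using hCW
  let emb : ∀ cc : Gc.ConnectedComponent, ↥(cc.supp) → V := fun _ x => ↑(↑x : ↥S)
  have hemb_inj : ∀ (cc : Gc.ConnectedComponent) (x y : ↥(cc.supp)), emb cc x = emb cc y → x = y := by
    intro cc x y hxy
    exact Subtype.ext (Subtype.ext hxy)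
  have hemb_adj : ∀ (cc : Gc.ConnectedComponent) (x y : ↥(cc.supp)),
      (Gc.induce cc.supp).Adj x y ↔ G.Adj (emb cc x) (emb cc y) := by
    intro cc x y; rfl
  have hemb_nU : ∀ (cc : Gc.ConnectedComponent) (x : ↥(cc.supp)), emb cc x ∈ S := fun cc x => (↑x : ↥S).2
  let τ : ∀ cc : Gc.ConnectedComponent, Fin ℓ → V := fun cc i => emb cc ((CSc cc).init i)
  let mkC : ∀ (r : V), r ∈ S → Gc.ConnectedComponent := fun r hr =>
    Gc.connectedComponentMk ⟨r, hr⟩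
  let rEl : ∀ (r : V) (hr : r ∈ S), ↥((mkC r hr).supp) := fun r hr =>
    ⟨⟨r, hr⟩, (SimpleGraph.ConnectedComponent.mem_supp_iff _ _).mpr rfl⟩
  let k := g + ℓ
  let Mode : (Fin k → V) → V → Prop := fun c r =>
    ∃ cc : Gc.ConnectedComponent, ∃ hr : r ∈ S, ∃ hmem : (⟨r, hr⟩ : ↥S) ∈ cc.supp,
      ∃ x : Fin ℓ → ↥(cc.supp),
        (∀ i, emb cc (x i) = c (Fin.natAdd g i)) ∧
          WinFrom (Gc.induce cc.supp) (CSc cc) x ⟨⟨r, hr⟩, hmem⟩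
  -- the cop moves
  let gmove : (Fin k → V) → V → Fin g → V := fun c r j =>
    if OnP j (c (Fin.castAdd ℓ j)) then
      pp j (toward (f j (c (Fin.castAdd ℓ j))) (f j r))
    else approach hG (A j) (c (Fin.castAdd ℓ j))
  let cmove : (Fin k → V) → V → Fin ℓ → V := fun c r i =>
    if hM : Mode c r then
      emb hM.choose ((CSc hM.choose).move hM.choose_spec.choose_spec.choose_spec.choose
        ⟨⟨r, hM.choose_spec.choose⟩, hM.choose_spec.choose_spec.choose⟩ i)
    else if hr : r ∈ S then approach hG (τ (mkC r hr) i) (c (Fin.natAdd g i))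
    else c (Fin.natAdd g i)
  let mv : (Fin k → V) → V → Fin k → V := fun c r =>
    Fin.addCases (gmove c r) (cmove c r)
  have hmvG : ∀ c r j, mv c r (Fin.castAdd ℓ j) = gmove c r j := fun c r j =>
    Fin.addCases_left j
  have hmvC : ∀ c r i, mv c r (Fin.natAdd g i) = cmove c r i := fun c r i =>
    Fin.addCases_right i
  -- mode witness uniqueness
  have hModeWit : ∀ c r (hM : Mode c r) (cc : Gc.ConnectedComponent) (hr : r ∈ S)
      (hmem : (⟨r, hr⟩ : ↥S) ∈ cc.supp)
      (x : Fin ℓ → ↥(cc.supp)), (∀ i, emb cc (x i) = c (Fin.natAdd g i)) →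
      ∀ i, cmove c r i = emb cc ((CSc cc).move x ⟨⟨r, hr⟩, hmem⟩ i) := by
    intro c r hM cc hr hmem x hx i
    have hc : cmove c r i
        = emb hM.choose ((CSc hM.choose).move hM.choose_spec.choose_spec.choose_spec.choose
          ⟨⟨r, hM.choose_spec.choose⟩, hM.choose_spec.choose_spec.choose⟩ i) := by
      show (if hM' : Mode c r then _ else _) = _
      rw [dif_pos hM]
    rw [hc]
    have hcceq : hM.choose = cc := by
      have h1 := hM.choose_spec.choose_spec.choose
      rw [SimpleGraph.ConnectedComponent.mem_supp_iff] at h1 hmem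
      rw [← h1, ← hmem]
    subst hcceq
    have hxeq : hM.choose_spec.choose_spec.choose_spec.choose = x := by
      funext i'
      exact hemb_inj _ _ _
        (by rw [hM.choose_spec.choose_spec.choose_spec.choose_spec.1 i', hx i'])
    rw [hxeq]
  let v0 : V := Classical.arbitrary V
  -- validity of the strategy
  have hvalid : ∀ c r i, mv c r i = c i ∨ G.Adj (c i) (mv c r i) := by
    intro c r i
    refine Fin.addCases (motive := fun i => mv c r i = c i ∨ G.Adj (c i) (mv c r i)) ?_ ?_ i
    · intro j
      rw [hmvG]
      by_cases hOP : OnP j (c (Fin.castAdd ℓ j))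
      · have hgm : gmove c r j = pp j (toward (f j (c (Fin.castAdd ℓ j))) (f j r)) := if_pos hOP
        rw [hgm]
        obtain ⟨i₀, hi₀, hpi⟩ := hOP
        have hfc : f j (c (Fin.castAdd ℓ j)) = i₀ := by rw [← hpi, hf_get j i₀ hi₀]
        rw [hfc]
        have hF : f j r ≤ t j := hf_le j r
        rcases lt_trichotomy i₀ (f j r) with hlt | heq | hgt
        · right
          have htw : toward i₀ (f j r) = i₀ + 1 := by unfold toward; rw [if_pos hlt]
          rw [htw, ← hpi]
          exact hpp_adj j i₀ (lt_of_lt_of_le hlt hF)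
        · left
          have htw : toward i₀ (f j r) = i₀ := by unfold toward; split_ifs <;> omega
          rw [htw, hpi]
        · right
          have htw : toward i₀ (f j r) = i₀ - 1 := by unfold toward; split_ifs <;> omega
          rw [htw, ← hpi]
          have h2 : i₀ - 1 + 1 = i₀ := by omega
          have h3 := hpp_adj j (i₀ - 1) (by omega : i₀ - 1 < t j)
          rw [h2] at h3
          exact h3.symm
      · have hgm : gmove c r j = approach hG (A j) (c (Fin.castAdd ℓ j)) := if_neg hOP
        rw [hgm]
        right
        have hne : c (Fin.castAdd ℓ j) ≠ A j := by
          intro he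
          exact hOP ⟨0, Nat.zero_le _, by rw [hppA j, he]⟩
        exact (approach_spec hG hne).1
    · intro i
      rw [hmvC]
      by_cases hM : Mode c r
      · have hcm : cmove c r i
            = emb hM.choose ((CSc hM.choose).move hM.choose_spec.choose_spec.choose_spec.choose
              ⟨⟨r, hM.choose_spec.choose⟩, hM.choose_spec.choose_spec.choose⟩ i) := by
          show (if hM' : Mode c r then _ else _) = _
          rw [dif_pos hM]
        rw [hcm]
        have hx' := hM.choose_spec.choose_spec.choose_spec.choose_spec.1
        rcases (CSc hM.choose).valid hM.choose_spec.choose_spec.choose_spec.choose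
          ⟨⟨r, hM.choose_spec.choose⟩, hM.choose_spec.choose_spec.choose⟩ i with hv | hv
        · left; rw [hv]; exact hx' i
        · right
          rw [← hx' i]
          exact (hemb_adj _ _ _).mp hv
      · have hcm : cmove c r i = if hr : r ∈ S then
            approach hG (τ (mkC r hr) i) (c (Fin.natAdd g i)) else c (Fin.natAdd g i) := by
          show (if hM' : Mode c r then _ else _) = _
          rw [dif_neg hM]
        rw [hcm]
        by_cases hr : r ∈ S
        · rw [dif_pos hr]
          by_cases he : c (Fin.natAdd g i) = τ (mkC r hr) i
          · left; rw [he]; exact approach_self hG _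
          · right; exact (approach_spec hG he).1
        · rw [dif_neg hr]; left; rfl
  refine ⟨⟨fun _ => v0, mv, hvalid⟩, ?_⟩
  intro RS
  by_contra hnc
  set P : ℕ → (Fin k → V) × V := gplay (fun _ => v0) mv RS.init RS.move with hPdef
  have hPs : ∀ n, P (n + 1) = (mv (P n).1 (P n).2, RS.move (mv (P n).1 (P n).2) (P n).2) :=
    fun n => rfl
  have hnc1 : ∀ n i, (P n).1 i ≠ (P n).2 := by
    intro n i hcon
    exact hnc ⟨n, i, Or.inl hcon⟩
  have hnc2 : ∀ n i, mv (P n).1 (P n).2 i ≠ (P n).2 := by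
    intro n i hcon
    exact hnc ⟨n, i, Or.inr hcon⟩
  have hRval : ∀ n, (P (n + 1)).2 = (P n).2 ∨ G.Adj (P n).2 (P (n + 1)).2 := by
    intro n
    rw [hPs n]
    exact RS.valid _ _
  have hCstep : ∀ n, (P (n + 1)).1 = mv (P n).1 (P n).2 := fun n => by rw [hPs n]
  -- guard move computations
  have hgmove_eq : ∀ c r (j : Fin g), OnP j (c (Fin.castAdd ℓ j)) →
      mv c r (Fin.castAdd ℓ j) = pp j (toward (f j (c (Fin.castAdd ℓ j))) (f j r)) := by
    intro c r j hOP
    rw [hmvG]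
    exact if_pos hOP
  have hgmove_off : ∀ c r (j : Fin g), ¬ OnP j (c (Fin.castAdd ℓ j)) →
      mv c r (Fin.castAdd ℓ j) = approach hG (A j) (c (Fin.castAdd ℓ j)) := by
    intro c r j hOP
    rw [hmvG]
    exact if_neg hOP
  let SetP : Fin g → ℕ → Prop := fun j n =>
    OnP j ((P n).1 (Fin.castAdd ℓ j)) ∧
      f j ((P n).1 (Fin.castAdd ℓ j)) ≤ f j ((P n).2) + 1 ∧
      f j ((P n).2) ≤ f j ((P n).1 (Fin.castAdd ℓ j)) + 1
  have hgm2 : ∀ n (j : Fin g), SetP j n →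
      mv (P n).1 (P n).2 (Fin.castAdd ℓ j) = pp j (f j ((P n).2)) := by
    intro n j hs
    rw [hgmove_eq _ _ j hs.1, toward_of_close hs.2.1 hs.2.2]
  have habsorbG : ∀ (j : Fin g) n, SetP j n → SetP j (n + 1) := by
    intro j n hs
    have hnew : (P (n + 1)).1 (Fin.castAdd ℓ j) = pp j (f j ((P n).2)) := by
      rw [hCstep n, hgm2 n j hs]
    have hFle : f j ((P n).2) ≤ t j := hf_le j _
    have hOn' : OnP j ((P (n + 1)).1 (Fin.castAdd ℓ j)) := ⟨_, hFle, hnew.symm⟩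
    have hfc' : f j ((P (n + 1)).1 (Fin.castAdd ℓ j)) = f j ((P n).2) := by
      rw [hnew, hf_get j _ hFle]
    have hstep := hf_step j (hRval n)
    exact ⟨hOn', by omega, by omega⟩
  let MG : Fin g → ℕ → ℕ := fun j n =>
    if SetP j n then 0
    else if OnP j ((P n).1 (Fin.castAdd ℓ j)) then
      (if f j ((P n).1 (Fin.castAdd ℓ j)) ≤ f j ((P n).2)
        then t j - f j ((P n).1 (Fin.castAdd ℓ j))
        else f j ((P n).1 (Fin.castAdd ℓ j)))
    else t j + 1 + G.dist ((P n).1 (Fin.castAdd ℓ j)) (A j)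
  have hMGeq : ∀ (j : Fin g) n, MG j n =
    if SetP j n then 0
    else if OnP j ((P n).1 (Fin.castAdd ℓ j)) then
      (if f j ((P n).1 (Fin.castAdd ℓ j)) ≤ f j ((P n).2)
        then t j - f j ((P n).1 (Fin.castAdd ℓ j))
        else f j ((P n).1 (Fin.castAdd ℓ j)))
    else t j + 1 + G.dist ((P n).1 (Fin.castAdd ℓ j)) (A j) := fun _ _ => rfl
  have hMGdec : ∀ (j : Fin g) n, ¬ SetP j n → MG j (n + 1) < MG j n := by
    intro j n hns
    have hfleC : f j ((P n).1 (Fin.castAdd ℓ j)) ≤ t j := hf_le j _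
    have hfleC' : f j ((P (n+1)).1 (Fin.castAdd ℓ j)) ≤ t j := hf_le j _
    have hfleR : f j ((P n).2) ≤ t j := hf_le j _
    have hfleR' : f j ((P (n+1)).2) ≤ t j := hf_le j _
    have hstepR := hf_step j (hRval n)
    rw [hMGeq j n, hMGeq j (n+1), if_neg hns]
    by_cases hOP : OnP j ((P n).1 (Fin.castAdd ℓ j))
    · rw [if_pos hOP]
      have hgap : ¬ (f j ((P n).1 (Fin.castAdd ℓ j)) ≤ f j ((P n).2) + 1 ∧
          f j ((P n).2) ≤ f j ((P n).1 (Fin.castAdd ℓ j)) + 1) := by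
        intro hg
        exact hns ⟨hOP, hg.1, hg.2⟩
      have hcases : f j ((P n).1 (Fin.castAdd ℓ j)) + 2 ≤ f j ((P n).2) ∨
          f j ((P n).2) + 2 ≤ f j ((P n).1 (Fin.castAdd ℓ j)) := by omega
      rcases hcases with hlt | hgt
      · -- cop moves up
        have htw : toward (f j ((P n).1 (Fin.castAdd ℓ j))) (f j ((P n).2))
            = f j ((P n).1 (Fin.castAdd ℓ j)) + 1 := by
          unfold toward; rw [if_pos (by omega)]
        have hnew : (P (n+1)).1 (Fin.castAdd ℓ j)
            = pp j (f j ((P n).1 (Fin.castAdd ℓ j)) + 1) := by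
          rw [hCstep n, hgmove_eq _ _ j hOP, htw]
        have hs1 : f j ((P n).1 (Fin.castAdd ℓ j)) + 1 ≤ t j := by omega
        have hfc' : f j ((P (n+1)).1 (Fin.castAdd ℓ j))
            = f j ((P n).1 (Fin.castAdd ℓ j)) + 1 := by
          rw [hnew, hf_get j _ hs1]
        have hOn' : OnP j ((P (n+1)).1 (Fin.castAdd ℓ j)) := ⟨_, hs1, hnew.symm⟩
        rw [if_pos (by omega : f j ((P n).1 (Fin.castAdd ℓ j)) ≤ f j ((P n).2))]
        by_cases hS' : SetP j (n+1)
        · rw [if_pos hS']; omega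
        · rw [if_neg hS', if_pos hOn', hfc',
            if_pos (by omega : f j ((P n).1 (Fin.castAdd ℓ j)) + 1 ≤ f j ((P (n+1)).2))]
          omega
      · -- cop moves down
        have htw : toward (f j ((P n).1 (Fin.castAdd ℓ j))) (f j ((P n).2))
            = f j ((P n).1 (Fin.castAdd ℓ j)) - 1 := by
          unfold toward; rw [if_neg (by omega), if_pos (by omega)]
        have hnew : (P (n+1)).1 (Fin.castAdd ℓ j)
            = pp j (f j ((P n).1 (Fin.castAdd ℓ j)) - 1) := by
          rw [hCstep n, hgmove_eq _ _ j hOP, htw]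
        have hs1 : f j ((P n).1 (Fin.castAdd ℓ j)) - 1 ≤ t j := by omega
        have hfc' : f j ((P (n+1)).1 (Fin.castAdd ℓ j))
            = f j ((P n).1 (Fin.castAdd ℓ j)) - 1 := by
          rw [hnew, hf_get j _ hs1]
        have hOn' : OnP j ((P (n+1)).1 (Fin.castAdd ℓ j)) := ⟨_, hs1, hnew.symm⟩
        rw [if_neg (by omega : ¬ f j ((P n).1 (Fin.castAdd ℓ j)) ≤ f j ((P n).2))]
        by_cases hS' : SetP j (n+1)
        · rw [if_pos hS']; omega
        · have hne2 : ¬ (f j ((P n).1 (Fin.castAdd ℓ j)) - 1 ≤ f j ((P (n+1)).2)) := by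
            intro hle
            exact hS' ⟨hOn', by omega, by omega⟩
          rw [if_neg hS', if_pos hOn', hfc', if_neg hne2]
          omega
    · -- off path
      rw [if_neg hOP]
      have hne : (P n).1 (Fin.castAdd ℓ j) ≠ A j := by
        intro he
        exact hOP ⟨0, Nat.zero_le _, by rw [hppA j, he]⟩
      have hnew : (P (n+1)).1 (Fin.castAdd ℓ j)
          = approach hG (A j) ((P n).1 (Fin.castAdd ℓ j)) := by
        rw [hCstep n, hgmove_off _ _ j hOP]
      have hspec := approach_spec hG hne
      by_cases hS' : SetP j (n+1)
      · rw [if_pos hS']; omega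
      · rw [if_neg hS']
        by_cases hOn' : OnP j ((P (n+1)).1 (Fin.castAdd ℓ j))
        · rw [if_pos hOn']
          split_ifs <;> omega
        · rw [if_neg hOn', hnew]
          omega
  choose TG hTG using fun j : Fin g => eventually_forever (habsorbG j) (hMGdec j)
  let T0 : ℕ := Finset.univ.sup TG
  have hT0 : ∀ (j : Fin g) (n : ℕ), T0 ≤ n → SetP j n := fun j n hn =>
    hTG j n (le_trans (Finset.le_sup (Finset.mem_univ j)) hn)
  have hRoffP : ∀ n, T0 ≤ n → ∀ j, ¬ OnP j ((P n).2) := by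
    intro n hn j hOP
    exact hnc2 n (Fin.castAdd ℓ j) (by rw [hgm2 n j (hT0 j n hn), hOnP_f j _ hOP])
  have hRS' : ∀ n, T0 ≤ n → ((P n).2) ∈ S := by
    intro n hn
    by_contra hns
    have hrU : (P n).2 ∈ U := by
      rw [hSdef] at hns
      simpa using hns
    obtain ⟨j, hOP⟩ := hUcov _ hrU
    exact hRoffP n hn j hOP
  -- component constancy
  have hreachstep : ∀ n, T0 ≤ n → ∀ (hr : (P n).2 ∈ S) (hr' : (P (n+1)).2 ∈ S),
      Gc.connectedComponentMk ⟨(P (n+1)).2, hr'⟩ = Gc.connectedComponentMk ⟨(P n).2, hr⟩ := by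
    intro n hn hr hr'
    rcases hRval n with he | ha
    · congr 1
      exact Subtype.ext he
    · refine SimpleGraph.ConnectedComponent.sound (SimpleGraph.Adj.reachable ?_)
      show Gc.Adj _ _
      exact ha.symm
  obtain ⟨cc0, hcomp⟩ : ∃ cc0 : Gc.ConnectedComponent, ∀ n, T0 ≤ n → ∀ (hr : (P n).2 ∈ S),
      Gc.connectedComponentMk ⟨(P n).2, hr⟩ = cc0 := by
    refine ⟨Gc.connectedComponentMk ⟨(P T0).2, hRS' T0 le_rfl⟩, ?_⟩
    intro n hn
    induction n, hn using Nat.le_induction with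
    | base => intro hr; rfl
    | succ n hn ih =>
      intro hr'
      rw [hreachstep n hn (hRS' n hn) hr']
      exact ih (hRS' n hn)
  have hmem_of : ∀ n (_ : T0 ≤ n) (hr : (P n).2 ∈ S), (⟨(P n).2, hr⟩ : ↥S) ∈ cc0.supp :=
    fun n hn hr => (SimpleGraph.ConnectedComponent.mem_supp_iff _ _).mpr (hcomp n hn hr)
  -- mode is absorbing
  have hModeStep : ∀ n, T0 ≤ n → Mode (P n).1 (P n).2 → Mode (P (n+1)).1 (P (n+1)).2 := by
    intro n hn hM
    obtain ⟨cc, hr, hmem, x, hx, hWf⟩ := hM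
    have hMn : Mode (P n).1 (P n).2 := ⟨cc, hr, hmem, x, hx, hWf⟩
    have hr' : (P (n+1)).2 ∈ S := hRS' (n+1) (by omega)
    have hmem' : (⟨(P (n+1)).2, hr'⟩ : ↥S) ∈ cc.supp := by
      rw [SimpleGraph.ConnectedComponent.mem_supp_iff, hreachstep n hn hr hr']
      exact (SimpleGraph.ConnectedComponent.mem_supp_iff _ _).mp hmem
    have hxmove : ∀ i, (P (n+1)).1 (Fin.natAdd g i)
        = emb cc ((CSc cc).move x ⟨⟨(P n).2, hr⟩, hmem⟩ i) := by
      intro i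
      rw [hCstep n, hmvC]
      exact hModeWit _ _ hMn cc hr hmem x hx i
    have hyval : (⟨⟨(P (n+1)).2, hr'⟩, hmem'⟩ : ↥(cc.supp)) = ⟨⟨(P n).2, hr⟩, hmem⟩ ∨
        (Gc.induce cc.supp).Adj ⟨⟨(P n).2, hr⟩, hmem⟩ ⟨⟨(P (n+1)).2, hr'⟩, hmem'⟩ := by
      rcases hRval n with he | ha
      · left; exact Subtype.ext (Subtype.ext he)
      · right; exact ha
    have h0 : ∀ i, x i ≠ ⟨⟨(P n).2, hr⟩, hmem⟩ := by
      intro i he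
      exact hnc1 n (Fin.natAdd g i) (by rw [← hx i, he])
    have h1 : ∀ i, (CSc cc).move x ⟨⟨(P n).2, hr⟩, hmem⟩ i ≠ ⟨⟨(P n).2, hr⟩, hmem⟩ := by
      intro i he
      refine hnc2 n (Fin.natAdd g i) ?_
      have := hxmove i
      rw [hCstep n] at this
      rw [this, he]
    exact ⟨cc, hr', hmem', (CSc cc).move x ⟨⟨(P n).2, hr⟩, hmem⟩,
      fun i => (hxmove i).symm, hWf.step hyval h0 h1⟩
  -- the chasers eventually reach chase mode
  have hModeEventual : ∃ T2, ∀ d, T2 ≤ d → Mode (P (T0 + d)).1 (P (T0 + d)).2 := by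
    refine eventually_forever (S := fun d => Mode (P (T0 + d)).1 (P (T0 + d)).2)
      (M := fun d => ∑ i : Fin ℓ, G.dist ((P (T0 + d)).1 (Fin.natAdd g i)) (τ cc0 i)) ?_ ?_
    · intro d hMd
      have hstep := hModeStep (T0 + d) (by omega) hMd
      have heq : T0 + (d + 1) = (T0 + d) + 1 := by omega
      rw [heq]
      exact hstep
    · intro d hMd
      have hn : T0 ≤ T0 + d := by omega
      have hr : (P (T0 + d)).2 ∈ S := hRS' _ hn
      have hcw : ∀ i, (P (T0 + d + 1)).1 (Fin.natAdd g i)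
          = approach hG (τ cc0 i) ((P (T0 + d)).1 (Fin.natAdd g i)) := by
        intro i
        rw [hCstep (T0 + d), hmvC]
        have hstep2 : cmove (P (T0 + d)).1 (P (T0 + d)).2 i
            = approach hG (τ (mkC ((P (T0 + d)).2) hr) i) ((P (T0 + d)).1 (Fin.natAdd g i)) := by
          show (if hM' : Mode (P (T0 + d)).1 (P (T0 + d)).2 then _ else _) = _
          rw [dif_neg hMd, dif_pos hr]
        rw [hstep2]
        congr 2
        show Gc.connectedComponentMk ⟨(P (T0 + d)).2, hr⟩ = cc0
        exact hcomp _ hn hr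
      have hnotall : ∃ i : Fin ℓ, (P (T0 + d)).1 (Fin.natAdd g i) ≠ τ cc0 i := by
        by_contra hall
        push_neg at hall
        exact hMd ⟨cc0, hr, hmem_of _ hn hr, (CSc cc0).init,
          fun i => by rw [hall i], hCSc cc0 _⟩
      obtain ⟨i0, hi0⟩ := hnotall
      have heq : T0 + (d + 1) = T0 + d + 1 := by omega
      show (∑ i : Fin ℓ, G.dist ((P (T0 + (d + 1))).1 (Fin.natAdd g i)) (τ cc0 i))
          < ∑ i : Fin ℓ, G.dist ((P (T0 + d)).1 (Fin.natAdd g i)) (τ cc0 i)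
      rw [heq]
      refine Finset.sum_lt_sum (fun i _ => ?_) ⟨i0, Finset.mem_univ i0, ?_⟩
      · rw [hcw i]
        by_cases he : (P (T0 + d)).1 (Fin.natAdd g i) = τ cc0 i
        · rw [he, approach_self hG]
        · exact le_of_lt (approach_spec hG he).2
      · rw [hcw i0]
        exact (approach_spec hG hi0).2
  obtain ⟨T2', hT2'⟩ := hModeEventual
  have hModeT2 : ∀ n, T0 + T2' ≤ n → Mode (P n).1 (P n).2 := by
    intro n hn
    have heq : n = T0 + (T2' + (n - (T0 + T2'))) := by omega
    rw [heq]
    exact hT2' _ (by omega)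
  set T2 := T0 + T2' with hT2def
  have hT2le : T0 ≤ T2 := by omega
  obtain ⟨cc, hr2, hmem2, x2, hx2, hWf2⟩ := hModeT2 T2 le_rfl
  -- the simulated robber strategy in the component game
  let asm : (Fin ℓ → ↥(cc.supp)) → ↥(cc.supp) → (Fin k → V) := fun xc y =>
    Fin.addCases (fun j => pp j (f j (emb cc y))) (fun i => emb cc (xc i))
  have hasmG : ∀ xc y (j : Fin g), asm xc y (Fin.castAdd ℓ j) = pp j (f j (emb cc y)) :=
    fun xc y j => Fin.addCases_left j
  have hasmC : ∀ xc y (i : Fin ℓ), asm xc y (Fin.natAdd g i) = emb cc (xc i) :=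
    fun xc y i => Fin.addCases_right i
  let rmH : (Fin ℓ → ↥(cc.supp)) → ↥(cc.supp) → ↥(cc.supp) := fun xc y =>
    if hz : ∃ z : ↥(cc.supp), emb cc z = RS.move (asm xc y) (emb cc y) ∧
        (z = y ∨ (Gc.induce cc.supp).Adj y z) then hz.choose else y
  have hrmH_valid : ∀ xc y, rmH xc y = y ∨ (Gc.induce cc.supp).Adj y (rmH xc y) := by
    intro xc y
    by_cases hz : ∃ z : ↥(cc.supp), emb cc z = RS.move (asm xc y) (emb cc y) ∧
        (z = y ∨ (Gc.induce cc.supp).Adj y z)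
    · have heq : rmH xc y = hz.choose := dif_pos hz
      rw [heq]
      exact hz.choose_spec.2
    · left
      exact dif_neg hz
  let σ : ℕ → (Fin ℓ → ↥(cc.supp)) × ↥(cc.supp) :=
    gplay x2 (CSc cc).move (fun _ => (⟨⟨(P T2).2, hr2⟩, hmem2⟩ : ↥(cc.supp))) rmH
  -- from a correct simulation state, the chasers follow the component strategy
  have hsim : ∀ d (ihx : ∀ i, emb cc ((σ d).1 i) = (P (T2 + d)).1 (Fin.natAdd g i))
      (ihr : emb cc ((σ d).2) = (P (T2 + d)).2)
      (_ : WinFrom (Gc.induce cc.supp) (CSc cc) ((σ d).1) ((σ d).2)) (i : Fin ℓ),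
      mv (P (T2 + d)).1 (P (T2 + d)).2 (Fin.natAdd g i)
        = emb cc ((CSc cc).move (σ d).1 (σ d).2 i) := by
    intro d ihx ihr ihW i
    have hrn : (P (T2 + d)).2 ∈ S := hRS' _ (by omega)
    have hmemn : (⟨(P (T2 + d)).2, hrn⟩ : ↥S) ∈ cc.supp := by
      have h5 : (⟨(P (T2 + d)).2, hrn⟩ : ↥S) = ↑((σ d).2) := Subtype.ext ihr.symm
      rw [h5]
      exact ((σ d).2).2
    have hel : (⟨⟨(P (T2 + d)).2, hrn⟩, hmemn⟩ : ↥(cc.supp)) = (σ d).2 :=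
      Subtype.ext (Subtype.ext ihr.symm)
    have hMn : Mode (P (T2 + d)).1 (P (T2 + d)).2 :=
      ⟨cc, hrn, hmemn, (σ d).1, ihx, by rw [hel]; exact ihW⟩
    rw [hmvC, hModeWit _ _ hMn cc hrn hmemn ((σ d).1) ihx i, hel]
  -- the component game play mirrors the real play
  have hcorr : ∀ d, (∀ i, emb cc ((σ d).1 i) = (P (T2 + d)).1 (Fin.natAdd g i)) ∧
      emb cc ((σ d).2) = (P (T2 + d)).2 ∧
      WinFrom (Gc.induce cc.supp) (CSc cc) ((σ d).1) ((σ d).2) := by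
    intro d
    induction d with
    | zero => exact ⟨hx2, rfl, hWf2⟩
    | succ d ih =>
      obtain ⟨ihx, ihr, ihW⟩ := ih
      have hxm : ∀ i, (P (T2 + d + 1)).1 (Fin.natAdd g i)
          = emb cc ((CSc cc).move (σ d).1 (σ d).2 i) := by
        intro i
        rw [hCstep (T2 + d)]
        exact hsim d ihx ihr ihW i
      have hgp : ∀ j : Fin g, (P (T2 + d + 1)).1 (Fin.castAdd ℓ j)
          = pp j (f j ((P (T2 + d)).2)) := by
        intro j
        rw [hCstep (T2 + d)]
        exact hgm2 (T2 + d) j (hT0 j (T2 + d) (by omega))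
      have hasm : (P (T2 + d + 1)).1 = asm ((CSc cc).move (σ d).1 (σ d).2) ((σ d).2) := by
        funext idx
        refine Fin.addCases (motive := fun idx => (P (T2 + d + 1)).1 idx
          = asm ((CSc cc).move (σ d).1 (σ d).2) ((σ d).2) idx) ?_ ?_ idx
        · intro j
          rw [hasmG, hgp j, ihr]
        · intro i
          rw [hasmC, hxm i]
      have hrnext : (P (T2 + d + 1)).2
          = RS.move (asm ((CSc cc).move (σ d).1 (σ d).2) ((σ d).2)) (emb cc ((σ d).2)) := by
        have h6 : (P (T2 + d + 1)).2
            = RS.move (mv (P (T2 + d)).1 (P (T2 + d)).2) ((P (T2 + d)).2) := by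
          rw [hPs (T2 + d)]
        rw [h6, ← hCstep (T2 + d), hasm, ← ihr]
      have hrn1 : (P (T2 + d + 1)).2 ∈ S := hRS' _ (by omega)
      have hmemn1 : (⟨(P (T2 + d + 1)).2, hrn1⟩ : ↥S) ∈ cc.supp := by
        rw [SimpleGraph.ConnectedComponent.mem_supp_iff,
          hreachstep (T2 + d) (by omega) (hRS' _ (by omega)) hrn1]
        have hrn : (P (T2 + d)).2 ∈ S := hRS' _ (by omega)
        have h5 : (⟨(P (T2 + d)).2, hrn⟩ : ↥S) = ↑((σ d).2) := Subtype.ext ihr.symm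
        rw [h5]
        exact ((σ d).2).2
      have hzex : ∃ z : ↥(cc.supp),
          emb cc z = RS.move (asm ((CSc cc).move (σ d).1 (σ d).2) ((σ d).2))
            (emb cc ((σ d).2)) ∧
          (z = (σ d).2 ∨ (Gc.induce cc.supp).Adj ((σ d).2) z) := by
        refine ⟨⟨⟨(P (T2 + d + 1)).2, hrn1⟩, hmemn1⟩, ?_, ?_⟩
        · show ((P (T2 + d + 1)).2 : V) = _
          exact hrnext
        rcases hRval (T2 + d) with he | ha
        · left
          exact Subtype.ext (Subtype.ext (he.trans ihr.symm))
        · right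
          refine (hemb_adj cc _ _).mpr ?_
          show G.Adj (emb cc ((σ d).2)) ((P (T2 + d + 1)).2)
          rw [ihr]
          exact ha
      have hrmstep : rmH ((CSc cc).move (σ d).1 (σ d).2) ((σ d).2)
          = ⟨⟨(P (T2 + d + 1)).2, hrn1⟩, hmemn1⟩ := by
        have h1 : rmH ((CSc cc).move (σ d).1 (σ d).2) ((σ d).2) = hzex.choose := dif_pos hzex
        rw [h1]
        apply hemb_inj
        rw [hzex.choose_spec.1]
        exact hrnext.symm
      refine ⟨?_, ?_, ?_⟩
      · intro i
        exact (hxm i).symm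
      · show emb cc ((σ (d + 1)).2) = (P (T2 + d + 1)).2
        have h7 : (σ (d + 1)).2 = rmH ((CSc cc).move (σ d).1 (σ d).2) ((σ d).2) := rfl
        rw [h7, hrmstep]
      · have h0 : ∀ i, (σ d).1 i ≠ (σ d).2 := by
          intro i he
          exact hnc1 (T2 + d) (Fin.natAdd g i) (by rw [← ihx i, he, ihr])
        have h1 : ∀ i, (CSc cc).move (σ d).1 (σ d).2 i ≠ (σ d).2 := by
          intro i he
          refine hnc2 (T2 + d) (Fin.natAdd g i) ?_
          have h2 := hxm i
          rw [hCstep (T2 + d)] at h2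
          rw [h2, he, ihr]
        have hval' : (σ (d + 1)).2 = (σ d).2 ∨
            (Gc.induce cc.supp).Adj ((σ d).2) ((σ (d + 1)).2) :=
          hrmH_valid ((CSc cc).move (σ d).1 (σ d).2) ((σ d).2)
        exact ihW.step hval' h0 h1
  -- the component strategy catches the simulated robber: contradiction
  obtain ⟨d, i, hcap⟩ := hWf2 rmH hrmH_valid
  obtain ⟨cx, cr, cW⟩ := hcorr d
  rcases hcap with hcap | hcap
  · exact hnc1 (T2 + d) (Fin.natAdd g i)
      (by rw [← cx i, show (σ d).1 i = (σ d).2 from hcap, cr])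
  · refine hnc2 (T2 + d) (Fin.natAdd g i) ?_
    rw [hsim d cx cr cW i, show (CSc cc).move (σ d).1 (σ d).2 i = (σ d).2 from hcap, cr]
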